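/- Let G₁ and G₂ be finite groups. The trivial subgroup lies in CD(G₁ × G₂) if and only if the trivial subgroup lies in CD(G₁) and the trivial subgroup lies in CD(G₂). -/

import Mathlib

open Pointwise

/-- The Chermak-Delgado measure of a subgroup: `m_G(H) = |H| * |C_G(H)|`. -/
noncomputable def cdMeasure {G : Type*} [Group G] (H : Subgroup G) : Nat :=
  Nat.card H * Nat.card (Subgroup.centralizer (H : Set G))

/-- The Chermak-Delgado lattice of `G`: the subgroups of maximal Chermak-Delgado measure. -/
def CD (G : Type*) [Group G] : Set (Subgroup G) :=
  {H | ∀ K : Subgroup G, cdMeasure K ≤ cdMeasure H}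

lemma cd_bot (G : Type*) [Group G] : cdMeasure (⊥ : Subgroup G) = Nat.card G := by
  have h : Subgroup.centralizer ({1} : Set G) = ⊤ := by
    ext g
    simp [Subgroup.mem_centralizer_iff]
  simp [cdMeasure, Subgroup.coe_bot, h]

lemma centralizer_prod {G₁ G₂ : Type*} [Group G₁] [Group G₂] (H₁ : Subgroup G₁)
    (H₂ : Subgroup G₂) :
    Subgroup.centralizer ((H₁.prod H₂ : Subgroup (G₁ × G₂)) : Set (G₁ × G₂)) =
      (Subgroup.centralizer (H₁ : Set G₁)).prod (Subgroup.centralizer (H₂ : Set G₂)) := by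
  ext ⟨g₁, g₂⟩
  simp only [Subgroup.mem_centralizer_iff, Subgroup.mem_prod, SetLike.mem_coe, Prod.forall,
    Subgroup.mem_prod, Prod.mk_mul_mk, Prod.ext_iff]
  constructor
  · intro h
    exact ⟨fun x hx => (h x 1 ⟨hx, H₂.one_mem⟩).1, fun y hy => (h 1 y ⟨H₁.one_mem, hy⟩).2⟩
  · rintro ⟨h1, h2⟩ x y ⟨hx, hy⟩
    exact ⟨h1 x hx, h2 y hy⟩

lemma card_prod_sub {G₁ G₂ : Type*} [Group G₁] [Group G₂] (H₁ : Subgroup G₁) (H₂ : Subgroup G₂) :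
    Nat.card (H₁.prod H₂) = Nat.card H₁ * Nat.card H₂ := by
  rw [Nat.card_congr (Subgroup.prodEquiv H₁ H₂).toEquiv, Nat.card_prod]

lemma cd_prod {G₁ G₂ : Type*} [Group G₁] [Group G₂] (H₁ : Subgroup G₁) (H₂ : Subgroup G₂) :
    cdMeasure (H₁.prod H₂) = cdMeasure H₁ * cdMeasure H₂ := by
  rw [cdMeasure, centralizer_prod, card_prod_sub, card_prod_sub]
  unfold cdMeasure
  ring

lemma centralizer_eq {G₁ G₂ : Type*} [Group G₁] [Group G₂] (K : Subgroup (G₁ × G₂)) :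
    Subgroup.centralizer (K : Set (G₁ × G₂)) =
      (Subgroup.centralizer ((K.map (MonoidHom.fst G₁ G₂) : Subgroup G₁) : Set G₁)).prod
      (Subgroup.centralizer ((K.map (MonoidHom.snd G₁ G₂) : Subgroup G₂) : Set G₂)) := by
  ext ⟨g₁, g₂⟩
  simp only [Subgroup.mem_centralizer_iff, Subgroup.mem_prod, SetLike.mem_coe, Prod.forall,
    Prod.mk_mul_mk, Prod.ext_iff, Subgroup.mem_map]
  constructor
  · intro h
    constructor
    · rintro x ⟨⟨a, b⟩, hab, rfl⟩
      exact (h a b hab).1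
    · rintro y ⟨⟨a, b⟩, hab, rfl⟩
      exact (h a b hab).2
  · rintro ⟨h1, h2⟩ x y hxy
    exact ⟨h1 x ⟨(x, y), hxy, rfl⟩, h2 y ⟨(x, y), hxy, rfl⟩⟩

lemma le_prod_maps {G₁ G₂ : Type*} [Group G₁] [Group G₂] (K : Subgroup (G₁ × G₂)) :
    K ≤ (K.map (MonoidHom.fst G₁ G₂)).prod (K.map (MonoidHom.snd G₁ G₂)) := by
  rintro ⟨x, y⟩ h
  exact ⟨⟨(x, y), h, rfl⟩, ⟨(x, y), h, rfl⟩⟩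

theorem stmt7 {G₁ G₂ : Type*} [Group G₁] [Group G₂] [Fintype G₁] [Fintype G₂] :
    (⊥ : Subgroup (G₁ × G₂)) ∈ CD (G₁ × G₂) ↔
      (⊥ : Subgroup G₁) ∈ CD G₁ ∧ (⊥ : Subgroup G₂) ∈ CD G₂ := by
  have hb : cdMeasure (⊥ : Subgroup (G₁ × G₂)) =
      cdMeasure (⊥ : Subgroup G₁) * cdMeasure (⊥ : Subgroup G₂) := by
    rw [cd_bot, cd_bot, cd_bot, Nat.card_prod]
  have h1 : 0 < cdMeasure (⊥ : Subgroup G₁) := by rw [cd_bot]; exact Nat.card_pos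
  have h2 : 0 < cdMeasure (⊥ : Subgroup G₂) := by rw [cd_bot]; exact Nat.card_pos
  constructor
  · intro h
    constructor
    · intro K₁
      have := h (K₁.prod ⊥)
      rw [cd_prod, hb] at this
      exact Nat.le_of_mul_le_mul_right (by simpa [mul_comm] using this) h2
    · intro K₂
      have := h (Subgroup.prod ⊥ K₂)
      rw [cd_prod, hb] at this
      exact Nat.le_of_mul_le_mul_left this h1
  · rintro ⟨ha, hc⟩ K
    have hcard : Nat.card K ≤
        Nat.card (K.map (MonoidHom.fst G₁ G₂)) * Nat.card (K.map (MonoidHom.snd G₁ G₂)) := by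
      rw [← card_prod_sub]
      exact Subgroup.card_le_of_le (le_prod_maps K)
    calc cdMeasure K
        = Nat.card K * Nat.card (Subgroup.centralizer (K : Set (G₁ × G₂))) := rfl
      _ ≤ (Nat.card (K.map (MonoidHom.fst G₁ G₂)) * Nat.card (K.map (MonoidHom.snd G₁ G₂))) *
          Nat.card (Subgroup.centralizer (K : Set (G₁ × G₂))) :=
            Nat.mul_le_mul_right _ hcard
      _ = cdMeasure (K.map (MonoidHom.fst G₁ G₂)) * cdMeasure (K.map (MonoidHom.snd G₁ G₂)) := by
            rw [centralizer_eq, card_prod_sub]; unfold cdMeasure; ring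
      _ ≤ cdMeasure (⊥ : Subgroup G₁) * cdMeasure (⊥ : Subgroup G₂) :=
            Nat.mul_le_mul (ha _) (hc _)
      _ = cdMeasure (⊥ : Subgroup (G₁ × G₂)) := hb.symm
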